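/- Let p be a prime and m ≥ 1 an integer. The number of points x ∈ [0,1] that are periodic of order m for g_p (i.e., g_p^m(x) = x and g_p^i(x) ≠ x for all 1 ≤ i < m, where g_p^i denotes the i-fold iterate) equals m times the number of monic irreducible polynomials of degree m over the field ZMod p (equivalently, the number of roots of monic irreducible polynomials of degree m over F_p). -/

import Mathlib

open Polynomial

/-- The continuous piecewise linear map `g_p : [0,1] → [0,1]` that goes up and down
`p` times: on `[k/p, (k+1)/p]` it is `x ↦ p·x − k` for `k` even and
`x ↦ k + 1 − p·x` for `k` odd. -/
noncomputable def gp (p : ℕ) (x : ℝ) : ℝ :=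
  if Even ⌊(p : ℝ) * x⌋ then (p : ℝ) * x - ⌊(p : ℝ) * x⌋
  else (⌊(p : ℝ) * x⌋ : ℝ) + 1 - (p : ℝ) * x

lemma gp_comp (p q : ℕ) (x : ℝ) : gp p (gp q x) = gp (p * q) x := by
  have hpq : ((p * q : ℕ) : ℝ) * x = (p : ℝ) * ((q : ℝ) * x) := by push_cast; ring
  set t : ℝ := (q : ℝ) * x with ht
  set k : ℤ := ⌊t⌋ with hk
  have hkle : (k : ℝ) ≤ t := Int.floor_le t
  have hklt : t < k + 1 := Int.lt_floor_add_one t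
  rcases Int.even_or_odd k with hke | hko
  · -- k even
    have hu : gp q x = t - k := by rw [gp, ← hk, if_pos hke]
    set u : ℝ := t - k with hudef
    set j : ℤ := ⌊(p:ℝ) * u⌋ with hj
    have hfl : ⌊((p*q:ℕ):ℝ) * x⌋ = p * k + j := by
      rw [hpq, show (p:ℝ) * t = (p:ℝ) * u + ((p * k : ℤ) : ℝ) by push_cast; rw [hudef]; ring,
        Int.floor_add_intCast, ← hj, add_comm]
    have e2 : gp (p*q) x = if Even ((p:ℤ)*k + j) then (p:ℝ)*t - ((p:ℤ)*k + j : ℤ)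
        else (((p:ℤ)*k + j : ℤ):ℝ) + 1 - (p:ℝ)*t := by
      rw [gp, hfl, hpq]
    have e1 : gp p u = if Even j then (p:ℝ)*u - j else (j:ℝ) + 1 - (p:ℝ)*u := by
      rw [gp, ← hj]
    have hpk : Even ((p:ℤ) * k) := hke.mul_left _
    rw [hu, e1, e2]
    obtain ⟨c, hc⟩ := hpk
    rcases Int.even_or_odd j with hje | hjo
    · obtain ⟨d, hd⟩ := hje
      rw [if_pos ⟨d, hd⟩, if_pos ⟨c + d, by omega⟩]
      push_cast; rw [hudef]; ring
    · obtain ⟨d, hd⟩ := hjo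
      rw [if_neg (by rw [Int.not_even_iff_odd]; exact ⟨d, hd⟩),
          if_neg (by rw [Int.not_even_iff_odd]; exact ⟨c + d, by omega⟩)]
      push_cast; rw [hudef]; ring
  · -- k odd
    have hu : gp q x = (k:ℝ) + 1 - t := by rw [gp, ← hk, if_neg (Int.not_even_iff_odd.mpr hko)]
    set u : ℝ := (k:ℝ) + 1 - t with hudef
    set j : ℤ := ⌊(p:ℝ) * u⌋ with hj
    have hjle : (j : ℝ) ≤ (p:ℝ) * u := Int.floor_le _
    have hjlt : (p:ℝ) * u < j + 1 := Int.lt_floor_add_one _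
    have hpk1 : Even ((p:ℤ) * (k + 1)) := (Int.even_add_one.mpr (Int.not_even_iff_odd.mpr hko)).mul_left _
    obtain ⟨c, hc⟩ := hpk1
    have hpt : (p:ℝ) * t = (((p:ℤ)*(k+1) : ℤ) : ℝ) - (p:ℝ) * u := by push_cast; rw [hudef]; ring
    rw [hu]
    rcases eq_or_ne ((p:ℝ)*u) (j:ℝ) with hint | hint
    · have hfl : ⌊((p*q:ℕ):ℝ) * x⌋ = p * (k+1) - j := by
        rw [hpq, hpt, hint, show (((p:ℤ)*(k+1) : ℤ):ℝ) - (j:ℝ) = (((p:ℤ)*(k+1) - j : ℤ):ℝ) by push_cast; ring,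
          Int.floor_intCast]
      have e2 : gp (p*q) x = if Even ((p:ℤ)*(k+1) - j) then (p:ℝ)*t - ((p:ℤ)*(k+1) - j : ℤ)
          else (((p:ℤ)*(k+1) - j : ℤ):ℝ) + 1 - (p:ℝ)*t := by
        rw [gp, hfl, hpq]
      have e1 : gp p u = if Even j then (p:ℝ)*u - j else (j:ℝ) + 1 - (p:ℝ)*u := by
        rw [gp, ← hj]
      rw [e1, e2]
      rcases Int.even_or_odd j with hje | hjo
      · obtain ⟨d, hd⟩ := hje
        rw [if_pos ⟨d, hd⟩, if_pos ⟨c - d, by omega⟩]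
        rw [hpt, hint]; push_cast; ring
      · obtain ⟨d, hd⟩ := hjo
        rw [if_neg (by rw [Int.not_even_iff_odd]; exact ⟨d, hd⟩),
            if_neg (by rw [Int.not_even_iff_odd]; exact ⟨c - d - 1, by omega⟩)]
        rw [hpt, hint]; push_cast; ring
    · have hjlt' : (j:ℝ) < (p:ℝ) * u := lt_of_le_of_ne hjle (Ne.symm hint)
      have hfl : ⌊((p*q:ℕ):ℝ) * x⌋ = p * (k+1) - j - 1 := by
        rw [hpq, hpt, Int.floor_eq_iff]
        constructor
        · push_cast; linarith
        · push_cast; linarith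
      have e2 : gp (p*q) x = if Even ((p:ℤ)*(k+1) - j - 1) then (p:ℝ)*t - ((p:ℤ)*(k+1) - j - 1 : ℤ)
          else (((p:ℤ)*(k+1) - j - 1 : ℤ):ℝ) + 1 - (p:ℝ)*t := by
        rw [gp, hfl, hpq]
      have e1 : gp p u = if Even j then (p:ℝ)*u - j else (j:ℝ) + 1 - (p:ℝ)*u := by
        rw [gp, ← hj]
      rw [e1, e2]
      rcases Int.even_or_odd j with hje | hjo
      · obtain ⟨d, hd⟩ := hje
        rw [if_pos ⟨d, hd⟩, if_neg (by rw [Int.not_even_iff_odd]; exact ⟨c - d - 1, by omega⟩)]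
        rw [hpt]; push_cast; ring
      · obtain ⟨d, hd⟩ := hjo
        rw [if_neg (by rw [Int.not_even_iff_odd]; exact ⟨d, hd⟩), if_pos ⟨c - d - 1, by omega⟩]
        rw [hpt]; push_cast; ring

noncomputable def phi (N : ℕ) (k : ℕ) : ℝ :=
  if Even k then (k : ℝ) / ((N : ℝ) - 1) else ((k : ℝ) + 1) / ((N : ℝ) + 1)

lemma phi_mem_fixed {N : ℕ} (hN : 2 ≤ N) {k : ℕ} (hk : k < N) :
    phi N k ∈ Set.Icc (0:ℝ) 1 ∧ gp N (phi N k) = phi N k := by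
  have hNR : (2:ℝ) ≤ (N:ℝ) := by exact_mod_cast hN
  have hNm : (0:ℝ) < (N:ℝ) - 1 := by linarith
  have hNp : (0:ℝ) < (N:ℝ) + 1 := by linarith
  rcases Nat.even_or_odd k with hke | hko
  · rw [phi, if_pos hke]
    set x : ℝ := (k : ℝ) / ((N : ℝ) - 1) with hx
    have hkR : (k:ℝ) ≤ (N:ℝ) - 1 := by
      have : (k:ℝ) + 1 ≤ (N:ℝ) := by exact_mod_cast hk
      linarith
    have hx0 : 0 ≤ x := div_nonneg (by positivity) hNm.le
    have hx1 : x ≤ 1 := by rw [hx, div_le_one hNm]; linarith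
    refine ⟨⟨hx0, hx1⟩, ?_⟩
    rcases eq_or_lt_of_le hkR with heq | hlt
    · -- k = N - 1, x = 1
      have hx1' : x = 1 := by rw [hx, heq, div_self hNm.ne']
      have hNodd : Odd N := by
        have : k + 1 = N := by exact_mod_cast (by rw [heq]; ring : (k:ℝ) + 1 = (N:ℝ))
        rcases hke with ⟨c, hc⟩; exact ⟨c, by omega⟩
      have hfl : ⌊(N:ℝ) * x⌋ = (N:ℤ) := by rw [hx1', mul_one, Int.floor_natCast]
      rw [gp, hfl, if_neg (by rw [Int.not_even_iff_odd]; exact_mod_cast hNodd)]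
      rw [hx1', mul_one]; push_cast; ring
    · have hxlt : x < 1 := by rw [hx, div_lt_one hNm]; exact hlt
      have hNx : (N:ℝ) * x = x + (k:ℝ) := by
        rw [hx]; field_simp; ring
      have hfl : ⌊(N:ℝ) * x⌋ = (k:ℤ) := by
        rw [hNx, show ((k:ℕ):ℝ) = ((k:ℤ):ℝ) by push_cast; ring, Int.floor_add_intCast,
          Int.floor_eq_zero_iff.mpr ⟨hx0, hxlt⟩, zero_add]
      rw [gp, hfl, if_pos (by exact_mod_cast hke)]
      rw [hNx]; push_cast; ring
  · rw [phi, if_neg (Nat.not_even_iff_odd.mpr hko)]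
    set x : ℝ := ((k : ℝ) + 1) / ((N : ℝ) + 1) with hx
    have hkR : (k:ℝ) + 1 ≤ (N:ℝ) := by exact_mod_cast hk
    have hx0 : 0 < x := div_pos (by positivity) hNp
    have hx1 : x < 1 := by rw [hx, div_lt_one hNp]; linarith
    refine ⟨⟨hx0.le, hx1.le⟩, ?_⟩
    have hNx : (N:ℝ) * x = (1 - x) + (k:ℝ) := by
      rw [hx]; field_simp; ring
    have hfl : ⌊(N:ℝ) * x⌋ = (k:ℤ) := by
      rw [hNx, show ((k:ℕ):ℝ) = ((k:ℤ):ℝ) by push_cast; ring, Int.floor_add_intCast,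
        Int.floor_eq_zero_iff.mpr ⟨by linarith, by linarith⟩, zero_add]
    rw [gp, hfl, if_neg (by rw [Int.not_even_iff_odd]; exact_mod_cast hko)]
    rw [hNx]; push_cast; ring

lemma fixed_subset {N : ℕ} (hN : 2 ≤ N) {x : ℝ} (hx0 : 0 ≤ x) (hx1 : x ≤ 1)
    (hfix : gp N x = x) : ∃ k < N, phi N k = x := by
  have hNR : (2:ℝ) ≤ (N:ℝ) := by exact_mod_cast hN
  have hNm : (0:ℝ) < (N:ℝ) - 1 := by linarith
  have hNp : (0:ℝ) < (N:ℝ) + 1 := by linarith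
  set k : ℤ := ⌊(N:ℝ) * x⌋ with hk
  have hk0 : 0 ≤ k := Int.floor_nonneg.mpr (by positivity)
  have hkN : k ≤ (N:ℤ) := by
    rw [hk, ← Int.floor_natCast (R := ℝ) N]
    exact Int.floor_le_floor (by nlinarith)
  rcases Int.even_or_odd k with hke | hko
  · rw [gp, ← hk, if_pos hke] at hfix
    have hkx : (k:ℝ) = x * ((N:ℝ) - 1) := by linarith
    have hkle : k ≤ (N:ℤ) - 1 := by
      have : (k:ℝ) ≤ (N:ℝ) - 1 := by nlinarith
      exact_mod_cast this
    refine ⟨k.toNat, by omega, ?_⟩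
    have hcast : ((k.toNat : ℕ) : ℝ) = (k:ℝ) := by
      have h := Int.toNat_of_nonneg hk0
      exact_mod_cast congrArg (Int.cast : ℤ → ℝ) h
    rw [phi, if_pos (by
      rcases hke with ⟨c, hc⟩
      exact (Int.even_coe_nat _).mp (by rw [Int.toNat_of_nonneg hk0]; exact ⟨c, hc⟩))]
    rw [hcast, hkx, mul_div_assoc, div_self hNm.ne', mul_one]
  · rw [gp, ← hk, if_neg (Int.not_even_iff_odd.mpr hko)] at hfix
    have hkx : (k:ℝ) + 1 = x * ((N:ℝ) + 1) := by linarith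
    rcases eq_or_lt_of_le hkN with heq | hlt
    · -- k = N, x = 1, N odd
      have hx1' : x = 1 := by
        have : (N:ℝ) + 1 = x * ((N:ℝ) + 1) := by rw [← hkx, heq]; push_cast; ring
        nlinarith
      have hNodd : Odd N := by
        have : Odd (N:ℤ) := heq ▸ hko
        exact_mod_cast this
      refine ⟨N - 1, by omega, ?_⟩
      rw [phi, if_pos (by rcases hNodd with ⟨c, hc⟩; exact ⟨c, by omega⟩)]
      rw [hx1', show ((N - 1 : ℕ) : ℝ) = (N:ℝ) - 1 by
        rw [Nat.cast_sub (by omega)]; norm_num]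
      rw [div_self hNm.ne']
    · refine ⟨k.toNat, by omega, ?_⟩
      have hcast : ((k.toNat : ℕ) : ℝ) = (k:ℝ) := by
        have h := Int.toNat_of_nonneg hk0
        exact_mod_cast congrArg (Int.cast : ℤ → ℝ) h
      rw [phi, if_neg (by
        rw [Nat.not_even_iff_odd]
        rcases hko with ⟨c, hc⟩
        have : Odd ((k.toNat : ℕ) : ℤ) := by rw [Int.toNat_of_nonneg hk0]; exact ⟨c, hc⟩
        exact_mod_cast this)]
      rw [hcast, hkx, mul_div_assoc, div_self hNp.ne', mul_one]

lemma phi_injOn {N : ℕ} (hN : 2 ≤ N) : Set.InjOn (phi N) ↑(Finset.range N) := by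
  have hNR : (2:ℝ) ≤ (N:ℝ) := by exact_mod_cast hN
  have hNm : (0:ℝ) < (N:ℝ) - 1 := by linarith
  have hNp : (0:ℝ) < (N:ℝ) + 1 := by linarith
  intro a ha b hb hab
  simp only [Finset.coe_range, Set.mem_Iio] at ha hb
  have key : ∀ c d : ℕ, c < N → d < N → Even c → ¬ Even d →
      (c:ℝ) / ((N:ℝ) - 1) ≠ ((d:ℝ) + 1) / ((N:ℝ) + 1) := by
    intro c d hc hd hce hdo habs
    rw [div_eq_div_iff hNm.ne' hNp.ne'] at habs
    have hZ : (c:ℤ) * ((N:ℤ) + 1) = ((d:ℤ) + 1) * ((N:ℤ) - 1) := by exact_mod_cast habs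
    have hcd : ((d:ℤ) + 1 - c) * (N:ℤ) = c + d + 1 := by nlinarith [hZ]
    have hcN : (c:ℤ) ≤ (N:ℤ) - 1 := by
      have : (c:ℤ) < (N:ℤ) := by exact_mod_cast hc
      omega
    have hdN : (d:ℤ) ≤ (N:ℤ) - 1 := by
      have : (d:ℤ) < (N:ℤ) := by exact_mod_cast hd
      omega
    have hNZ : (2:ℤ) ≤ (N:ℤ) := by exact_mod_cast hN
    have h1 : (d:ℤ) + 1 - c = 1 := by nlinarith
    have : c = d := by omega
    rw [Nat.not_even_iff_odd] at hdo
    rcases hce with ⟨e, he⟩; rcases hdo with ⟨f, hf⟩; omega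
  rcases Nat.even_or_odd a with hae | hao <;> rcases Nat.even_or_odd b with hbe | hbo
  · rw [phi, phi, if_pos hae, if_pos hbe, div_eq_div_iff hNm.ne' hNm.ne'] at hab
    have : (a:ℝ) = b := mul_right_cancel₀ hNm.ne' hab
    exact_mod_cast this
  · exact absurd (by rw [phi, phi, if_pos hae, if_neg (Nat.not_even_iff_odd.mpr hbo)] at hab; exact hab)
      (key a b ha hb hae (Nat.not_even_iff_odd.mpr hbo |> fun h => by rw [Nat.not_even_iff_odd]; exact hbo))
  · exact absurd (by rw [phi, phi, if_neg (Nat.not_even_iff_odd.mpr hao), if_pos hbe] at hab; exact hab.symm)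
      (key b a hb ha hbe (by rw [Nat.not_even_iff_odd]; exact hao))
  · rw [phi, phi, if_neg (Nat.not_even_iff_odd.mpr hao), if_neg (Nat.not_even_iff_odd.mpr hbo),
      div_eq_div_iff hNp.ne' hNp.ne'] at hab
    have : (a:ℝ) + 1 = (b:ℝ) + 1 := mul_right_cancel₀ hNp.ne' hab
    have : (a:ℝ) = b := by linarith
    exact_mod_cast this

lemma fixed_set_eq {N : ℕ} (hN : 2 ≤ N) :
    {x ∈ Set.Icc (0:ℝ) 1 | gp N x = x} = phi N '' ↑(Finset.range N) := by
  ext x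
  constructor
  · rintro ⟨⟨hx0, hx1⟩, hfix⟩
    obtain ⟨k, hk, hphi⟩ := fixed_subset hN hx0 hx1 hfix
    exact ⟨k, by simpa using hk, hphi⟩
  · rintro ⟨k, hk, rfl⟩
    obtain ⟨hmem, hfix⟩ := phi_mem_fixed hN (by simpa using hk)
    exact ⟨hmem, hfix⟩

lemma fixed_card {N : ℕ} (hN : 2 ≤ N) :
    {x ∈ Set.Icc (0:ℝ) 1 | gp N x = x}.ncard = N := by
  rw [fixed_set_eq hN, Set.ncard_image_of_injOn (phi_injOn hN), Set.ncard_coe_finset,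
    Finset.card_range]

lemma fixed_finite {N : ℕ} (hN : 2 ≤ N) :
    {x ∈ Set.Icc (0:ℝ) 1 | gp N x = x}.Finite := by
  rw [fixed_set_eq hN]
  exact ((Finset.range N).finite_toSet).image _




lemma dvd_aux (p n : ℕ) [Fact p.Prime] {f : Polynomial (ZMod p)} (hmon : f.Monic) (hirr : Irreducible f)
    (hdvd : f.natDegree ∣ n) (hn : n ≠ 0) :
    f ∣ (X ^ p ^ n - X : Polynomial (ZMod p)) := by
  haveI := Fact.mk hirr
  have hne : f ≠ 0 := hmon.ne_zero
  set K := AdjoinRoot f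
  haveI : Module.Finite (ZMod p) K := Module.Finite.of_basis (AdjoinRoot.powerBasis hne).basis
  haveI : Finite K := Module.finite_of_finite (ZMod p)
  haveI : Fintype K := Fintype.ofFinite K
  have hcardK : Fintype.card K = p ^ f.natDegree := by
    rw [Module.card_fintype (AdjoinRoot.powerBasis hne).basis, ZMod.card, Fintype.card_fin]
    rfl
  obtain ⟨c, hc⟩ := hdvd
  have hroot : (Polynomial.aeval (AdjoinRoot.root f)) (X ^ p ^ n - X : Polynomial (ZMod p)) = 0 := by
    have : (AdjoinRoot.root f) ^ (p ^ n) = AdjoinRoot.root f := by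
      rw [hc, pow_mul, ← hcardK]
      exact FiniteField.pow_card_pow c (AdjoinRoot.root f)
    simp [this]
  have hmin : minpoly (ZMod p) (AdjoinRoot.root f) = f := by
    rw [AdjoinRoot.minpoly_root hne, hmon.leadingCoeff, inv_one, map_one, mul_one]
  calc f = minpoly (ZMod p) (AdjoinRoot.root f) := hmin.symm
    _ ∣ _ := minpoly.dvd _ _ hroot

lemma sum_card_irreducible (p n : ℕ) [Fact p.Prime] (hn : n ≠ 0) :
    ∑ d ∈ n.divisors,
      d * {f : Polynomial (ZMod p) | f.Monic ∧ Irreducible f ∧ f.natDegree = d}.ncard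
      = p ^ n := by
  classical
  set F := GaloisField p n with hF
  haveI : Fintype F := Fintype.ofFinite F
  have hcardF : Fintype.card F = p ^ n := by
    rw [← Nat.card_eq_fintype_card]; exact GaloisField.card p n hn
  have hint : ∀ x : F, IsIntegral (ZMod p) x := fun x => IsIntegral.of_finite _ x
  have hdeg : ∀ x : F, (minpoly (ZMod p) x).natDegree ∣ n := by
    intro x
    have := minpoly.degree_dvd (hint x)
    rwa [GaloisField.finrank p hn] at this
  set g : Polynomial (ZMod p) := X ^ p ^ n - X with hg
  have hgne : g ≠ 0 :=
    FiniteField.X_pow_card_pow_sub_X_ne_zero (ZMod p) hn (Fact.out : p.Prime).one_lt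
  have hgsplits : Splits (g.map (algebraMap (ZMod p) F)) :=
    SplittingField.splits (X ^ p ^ n - X : Polynomial (ZMod p))
  set T : Finset (Polynomial (ZMod p)) :=
    Finset.image (fun x : F => minpoly (ZMod p) x) Finset.univ with hT
  have mem_T : ∀ f : Polynomial (ZMod p),
      f ∈ T ↔ f.Monic ∧ Irreducible f ∧ f.natDegree ∣ n := by
    intro f
    constructor
    · rintro hf
      obtain ⟨x, -, rfl⟩ := Finset.mem_image.mp hf
      exact ⟨minpoly.monic (hint x), minpoly.irreducible (hint x), hdeg x⟩
    · rintro ⟨hmon, hirr, hd⟩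
      have hfd : f ∣ g := dvd_aux p n hmon hirr hd hn
      have hsp : Splits (f.map (algebraMap (ZMod p) F)) :=
        hgsplits.of_dvd (Polynomial.map_ne_zero hgne) (Polynomial.map_dvd _ hfd)
      have hdne : f.degree ≠ 0 :=
        (Polynomial.natDegree_pos_iff_degree_pos.mp hirr.natDegree_pos).ne'
      obtain ⟨x, hx⟩ := hsp.exists_eval_eq_zero (by rwa [Polynomial.degree_map])
      have hx' : (Polynomial.aeval x) f = 0 := by rwa [Polynomial.aeval_def, ← Polynomial.eval_map]
      exact Finset.mem_image.mpr
        ⟨x, Finset.mem_univ x, (minpoly.eq_of_irreducible_of_monic hirr hx' hmon).symm⟩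
  have fiber_card : ∀ f ∈ T,
      (Finset.univ.filter (fun x : F => minpoly (ZMod p) x = f)).card = f.natDegree := by
    intro f hf
    obtain ⟨hmon, hirr, hd⟩ := (mem_T f).mp hf
    have hne : f ≠ 0 := hmon.ne_zero
    have hfd : f ∣ g := dvd_aux p n hmon hirr hd hn
    have hmapne : f.map (algebraMap (ZMod p) F) ≠ 0 := Polynomial.map_ne_zero hne
    have hsp : Splits (f.map (algebraMap (ZMod p) F)) :=
      hgsplits.of_dvd (Polynomial.map_ne_zero hgne) (Polynomial.map_dvd _ hfd)
    have hgmap : g.map (algebraMap (ZMod p) F) = X ^ Fintype.card F - X := by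
      rw [hg, Polynomial.map_sub, Polynomial.map_pow, Polynomial.map_X, hcardF]
    have hnodup : (f.map (algebraMap (ZMod p) F)).roots.Nodup := by
      have hle : (f.map (algebraMap (ZMod p) F)).roots ≤ (g.map (algebraMap (ZMod p) F)).roots :=
        Polynomial.roots.le_of_dvd (Polynomial.map_ne_zero hgne)
          (Polynomial.map_dvd _ hfd)
      have : (g.map (algebraMap (ZMod p) F)).roots.Nodup := by
        rw [hgmap, FiniteField.roots_X_pow_card_sub_X]
        exact Finset.univ.nodup
      exact Multiset.nodup_of_le hle this
    have hset : Finset.univ.filter (fun x : F => minpoly (ZMod p) x = f)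
        = (f.map (algebraMap (ZMod p) F)).roots.toFinset := by
      ext x
      simp only [Finset.mem_filter, Finset.mem_univ, true_and, Multiset.mem_toFinset,
        Polynomial.mem_roots hmapne, Polynomial.IsRoot, Polynomial.eval_map,
        ← Polynomial.aeval_def]
      constructor
      · rintro rfl; exact minpoly.aeval _ _
      · intro hx; exact (minpoly.eq_of_irreducible_of_monic hirr hx hmon).symm
    rw [hset, Multiset.toFinset_card_of_nodup hnodup,
      ← hsp.natDegree_eq_card_roots, Polynomial.natDegree_map]
  have h1 : Fintype.card F = ∑ f ∈ T, (Finset.univ.filter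
      (fun x : F => minpoly (ZMod p) x = f)).card :=
    Finset.card_eq_sum_card_fiberwise (fun x _ => Finset.mem_image_of_mem _ (Finset.mem_univ x))
  have h2 : ∑ f ∈ T, (Finset.univ.filter (fun x : F => minpoly (ZMod p) x = f)).card
      = ∑ f ∈ T, f.natDegree := Finset.sum_congr rfl fiber_card
  have h3 : ∑ d ∈ n.divisors, ∑ f ∈ T.filter (fun f => f.natDegree = d), f.natDegree
      = ∑ f ∈ T, f.natDegree :=
    Finset.sum_fiberwise_of_maps_to
      (fun f hf => Nat.mem_divisors.mpr ⟨((mem_T f).mp hf).2.2, hn⟩) _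
  have h4 : ∀ d ∈ n.divisors,
      {f : Polynomial (ZMod p) | f.Monic ∧ Irreducible f ∧ f.natDegree = d}
        = ↑(T.filter (fun f => f.natDegree = d)) := by
    intro d hd
    obtain ⟨hdvd, -⟩ := Nat.mem_divisors.mp hd
    ext f
    simp only [Set.mem_setOf_eq, Finset.coe_filter, mem_T]
    constructor
    · rintro ⟨hmon, hirr, hdeg⟩; exact ⟨⟨hmon, hirr, hdeg ▸ hdvd⟩, hdeg⟩
    · rintro ⟨⟨hmon, hirr, -⟩, hdeg⟩; exact ⟨hmon, hirr, hdeg⟩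
  calc ∑ d ∈ n.divisors,
        d * {f : Polynomial (ZMod p) | f.Monic ∧ Irreducible f ∧ f.natDegree = d}.ncard
      = ∑ d ∈ n.divisors, d * (T.filter (fun f => f.natDegree = d)).card := by
        refine Finset.sum_congr rfl fun d hd => ?_
        rw [h4 d hd, Set.ncard_coe_finset]
    _ = ∑ d ∈ n.divisors, ∑ f ∈ T.filter (fun f => f.natDegree = d), f.natDegree := by
        refine Finset.sum_congr rfl fun d hd => ?_
        rw [Finset.sum_congr rfl (fun f hf => (Finset.mem_filter.mp hf).2),
          Finset.sum_const, smul_eq_mul, mul_comm]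
    _ = p ^ n := by rw [h3, ← h2, ← h1, hcardF]

lemma gp_iterate (p : ℕ) : ∀ n : ℕ, n ≠ 0 → ∀ x : ℝ, (gp p)^[n] x = gp (p ^ n) x := by
  intro n
  induction n with
  | zero => intro h; exact absurd rfl h
  | succ n ih =>
    intro _ x
    rcases Nat.eq_zero_or_pos n with rfl | hn
    · simp [pow_one]
    · rw [Function.iterate_succ_apply', ih hn.ne' x, gp_comp, ← pow_succ']

lemma ncard_biUnion {α ι : Type*} (s : Finset ι) (t : ι → Set α)
    (hfin : ∀ i ∈ s, (t i).Finite)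
    (hdis : ∀ i ∈ s, ∀ j ∈ s, i ≠ j → Disjoint (t i) (t j)) :
    (⋃ i ∈ s, t i).ncard = ∑ i ∈ s, (t i).ncard := by
  classical
  induction s using Finset.induction with
  | empty => simp
  | insert a s hnotin ih =>
    rw [Finset.set_biUnion_insert, Finset.sum_insert hnotin,
      Set.ncard_union_eq ?_ (hfin a (Finset.mem_insert_self a s)) ?_,
      ih (fun i hi => hfin i (Finset.mem_insert_of_mem hi))
        (fun i hi j hj hij => hdis i (Finset.mem_insert_of_mem hi) j (Finset.mem_insert_of_mem hj) hij)]
    · rw [Set.disjoint_iUnion_right]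
      intro i
      rw [Set.disjoint_iUnion_right]
      intro hi
      exact hdis a (Finset.mem_insert_self a s) i (Finset.mem_insert_of_mem hi)
        (fun h => hnotin (h ▸ hi))
    · exact Set.Finite.biUnion (s.finite_toSet) (fun i hi => hfin i (Finset.mem_insert_of_mem hi))

/-- The number of points of `[0,1]` that are periodic of order `m` for `g_p` equals
`m` times the number of monic irreducible polynomials of degree `m` over `F_p`. -/
theorem card_periodic_eq_mul_card_irreducible (p m : ℕ) (hp : p.Prime) (hm : 1 ≤ m) :
    {x ∈ Set.Icc (0 : ℝ) 1 |
        (gp p)^[m] x = x ∧ ∀ i, 1 ≤ i → i < m → (gp p)^[i] x ≠ x}.ncard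
      = m * {f : Polynomial (ZMod p) | f.Monic ∧ Irreducible f ∧ f.natDegree = m}.ncard := by
  haveI := Fact.mk hp
  set g := gp p with hgdef
  set E : ℕ → Set ℝ := fun d => {x ∈ Set.Icc (0:ℝ) 1 | Function.minimalPeriod g x = d} with hE
  -- the set in the statement is E m
  have hEm : {x ∈ Set.Icc (0 : ℝ) 1 |
      g^[m] x = x ∧ ∀ i, 1 ≤ i → i < m → g^[i] x ≠ x} = E m := by
    ext x
    simp only [hE, Set.mem_setOf_eq]
    constructor
    · rintro ⟨hx, hfix, hmin⟩
      refine ⟨hx, le_antisymm (Function.IsPeriodicPt.minimalPeriod_le (by omega) hfix) ?_⟩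
      by_contra hlt
      push_neg at hlt
      have hpos : 0 < Function.minimalPeriod g x :=
        Function.IsPeriodicPt.minimalPeriod_pos (by omega) hfix
      exact hmin _ (by omega) (by omega) (Function.isPeriodicPt_minimalPeriod g x)
    · rintro ⟨hx, hper⟩
      refine ⟨hx, hper ▸ Function.isPeriodicPt_minimalPeriod g x, ?_⟩
      intro i h1 h2 hcon
      have := Function.IsPeriodicPt.minimalPeriod_le (by omega) hcon
      omega
  -- fixed point sets of iterates
  have hA : ∀ n : ℕ, n ≠ 0 →
      {x ∈ Set.Icc (0:ℝ) 1 | g^[n] x = x} = ⋃ d ∈ n.divisors, E d := by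
    intro n hn
    ext x
    simp only [Set.mem_setOf_eq, Set.mem_iUnion, hE]
    constructor
    · rintro ⟨hx, hfix⟩
      refine ⟨Function.minimalPeriod g x, Nat.mem_divisors.mpr
        ⟨Function.isPeriodicPt_iff_minimalPeriod_dvd.mp hfix, hn⟩, hx, rfl⟩
    · rintro ⟨d, hd, hx, hper⟩
      exact ⟨hx, Function.isPeriodicPt_iff_minimalPeriod_dvd.mpr
        (hper ▸ (Nat.mem_divisors.mp hd).1)⟩
  have hp2 : ∀ n : ℕ, n ≠ 0 → 2 ≤ p ^ n := fun n hn => Nat.one_lt_pow hn hp.one_lt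
  have hAfix : ∀ n : ℕ, n ≠ 0 →
      {x ∈ Set.Icc (0:ℝ) 1 | g^[n] x = x} = {x ∈ Set.Icc (0:ℝ) 1 | gp (p ^ n) x = x} := by
    intro n hn
    ext x
    simp only [Set.mem_setOf_eq, gp_iterate p n hn x, hgdef]
  have hAcard : ∀ n : ℕ, n ≠ 0 → {x ∈ Set.Icc (0:ℝ) 1 | g^[n] x = x}.ncard = p ^ n := by
    intro n hn
    rw [hAfix n hn]
    exact fixed_card (hp2 n hn)
  have hAfin : ∀ n : ℕ, n ≠ 0 → {x ∈ Set.Icc (0:ℝ) 1 | g^[n] x = x}.Finite := by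
    intro n hn
    rw [hAfix n hn]
    exact fixed_finite (hp2 n hn)
  have hEfin : ∀ n : ℕ, n ≠ 0 → ∀ d ∈ n.divisors, (E d).Finite := by
    intro n hn d hd
    refine Set.Finite.subset (hAfin n hn) ?_
    rw [hA n hn]
    exact Set.subset_biUnion_of_mem hd
  have hEdis : ∀ (i j : ℕ), i ≠ j → Disjoint (E i) (E j) := by
    intro i j hij
    rw [Set.disjoint_left]
    rintro x ⟨-, hxi⟩ ⟨-, hxj⟩
    exact hij (hxi ▸ hxj ▸ rfl)
  have hsumE : ∀ n : ℕ, n ≠ 0 → ∑ d ∈ n.divisors, (E d).ncard = p ^ n := by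
    intro n hn
    rw [← ncard_biUnion n.divisors E (hEfin n hn) (fun i _ j _ h => hEdis i j h), ← hA n hn]
    exact hAcard n hn
  -- main induction
  set N : ℕ → ℕ := fun d =>
    {f : Polynomial (ZMod p) | f.Monic ∧ Irreducible f ∧ f.natDegree = d}.ncard with hN
  have main : ∀ mm : ℕ, 1 ≤ mm → (E mm).ncard = mm * N mm := by
    intro mm
    induction mm using Nat.strong_induction_on with
    | _ mm ih =>
      intro h1
      have hmm : mm ≠ 0 := by omega
      have hs1 := hsumE mm hmm
      have hs2 := sum_card_irreducible p mm hmm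
      rw [← Nat.insert_self_properDivisors hmm,
        Finset.sum_insert (fun h => by simpa using (Nat.mem_properDivisors.mp h).2)] at hs1 hs2
      have hprop : ∑ d ∈ mm.properDivisors, (E d).ncard
          = ∑ d ∈ mm.properDivisors, d * N d := by
        refine Finset.sum_congr rfl fun d hd => ?_
        obtain ⟨hdvd, hlt⟩ := Nat.mem_properDivisors.mp hd
        exact ih d hlt (Nat.pos_of_dvd_of_pos hdvd (by omega))
      have key : (E mm).ncard + ∑ d ∈ mm.properDivisors, d * N d
          = mm * N mm + ∑ d ∈ mm.properDivisors, d * N d := by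
        simp only [hN] at hprop ⊢
        calc _ = (E mm).ncard + ∑ d ∈ mm.properDivisors, (E d).ncard := by rw [hprop]
          _ = p ^ mm := hs1
          _ = _ := hs2.symm
      exact Nat.add_right_cancel key
  rw [hEm]
  exact main m hm
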